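/- Let A ∈ ℝ^{m×m} with ‖A‖₂ = ρ < 1, let Σ = Σ_{i=0}^∞ A^i (Aᵀ)^i, let h be a positive integer, let z ∈ ℝ^m, and let ε_0, …, ε_{h−1} : Ω → ℝ^m be independent random vectors with square-integrable components, mean zero, and 𝔼[ε_i ε_iᵀ] = I_m. Setting w = A^h z + Σ_{i=0}^{h−1} A^i ε_i, the bias of the second-moment matrix satisfies ‖𝔼[w wᵀ] − Σ‖₂ ≤ ρ^{2h}·‖z‖₂² + ρ^{2h}/(1 − ρ²). Consequently, the bias decays geometrically in h. -/

import Mathlib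

open Matrix MeasureTheory ProbabilityTheory

/-- The spectral norm (largest singular value) of a real matrix, realized as the operator
norm of the induced linear map between Euclidean spaces. -/
noncomputable def matSpectralNorm {m n : ℕ} (A : Matrix (Fin m) (Fin n) ℝ) : ℝ :=
  ‖LinearMap.toContinuousLinearMap (Matrix.toEuclideanLin A)‖

section NormPart
open scoped Matrix.Norms.L2Operator

lemma l2_norm_outer_le {m : ℕ} (u : Fin m → ℝ) :
    ‖(Matrix.of fun j k : Fin m => u j * u k)‖
      ≤ ‖(WithLp.equiv 2 (Fin m → ℝ)).symm u‖ ^ 2 := by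
  set v : EuclideanSpace ℝ (Fin m) := (WithLp.equiv 2 (Fin m → ℝ)).symm u with hv
  rw [Matrix.l2_opNorm_def]
  refine ContinuousLinearMap.opNorm_le_bound _ (by positivity) fun x => ?_
  have happ : (Matrix.toEuclideanLin (Matrix.of fun j k : Fin m => u j * u k)) x
      = (inner ℝ v x : ℝ) • v := by
    ext j
    simp only [Matrix.toEuclideanLin_apply, Matrix.mulVec, dotProduct,
      Matrix.of_apply, WithLp.equiv_symm_apply, PiLp.smul_apply, smul_eq_mul,
      PiLp.inner_apply, RCLike.inner_apply, conj_trivial, hv]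
    rw [Finset.sum_mul]
    exact Finset.sum_congr rfl fun k _ => by ring
  show ‖(Matrix.toEuclideanLin (Matrix.of fun j k : Fin m => u j * u k)) x‖ ≤ _
  rw [happ, norm_smul, Real.norm_eq_abs]
  calc |(inner ℝ v x : ℝ)| * ‖v‖ ≤ (‖v‖ * ‖x‖) * ‖v‖ := by
        have := abs_real_inner_le_norm v x
        have hv0 : (0:ℝ) ≤ ‖v‖ := norm_nonneg _
        nlinarith [abs_nonneg (inner ℝ v x : ℝ), norm_nonneg x]
    _ = ‖v‖ ^ 2 * ‖x‖ := by ring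

lemma bias_norm_bound {m : ℕ} (h : ℕ) (hh : 0 < h) (A : Matrix (Fin m) (Fin m) ℝ)
    (ρ : ℝ) (hρA : matSpectralNorm A = ρ) (hρ : ρ < 1) (z : Fin m → ℝ) :
    matSpectralNorm ((Matrix.of fun j k : Fin m => ((A ^ h) *ᵥ z) j * ((A ^ h) *ᵥ z) k)
        + (∑ i : Fin h, A ^ (i : ℕ) * (Aᵀ) ^ (i : ℕ)) - ∑' i : ℕ, A ^ i * (Aᵀ) ^ i)
      ≤ ρ ^ (2 * h) * (∑ j, (z j) ^ 2) + ρ ^ (2 * h) / (1 - ρ ^ 2) := by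
  have hA : ‖A‖ = ρ := hρA
  have hρ0 : 0 ≤ ρ := hA ▸ norm_nonneg A
  have hρ2 : ρ ^ 2 < 1 := by nlinarith
  have hρ2' : (0:ℝ) < 1 - ρ ^ 2 := by nlinarith
  have hpow : ∀ n : ℕ, 0 < n → ‖A ^ n * (Aᵀ) ^ n‖ ≤ (ρ ^ 2) ^ n := by
    intro n hn
    have h1 : ‖A ^ n‖ ≤ ρ ^ n := hA ▸ norm_pow_le' A hn
    calc ‖A ^ n * (Aᵀ) ^ n‖ ≤ ‖A ^ n‖ * ‖(Aᵀ) ^ n‖ := Matrix.l2_opNorm_mul _ _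
      _ = ‖A ^ n‖ * ‖A ^ n‖ := by
          rw [← Matrix.transpose_pow, ← Matrix.conjTranspose_eq_transpose_of_trivial,
            Matrix.l2_opNorm_conjTranspose]
      _ ≤ ρ ^ n * ρ ^ n := by
          have := norm_nonneg (A ^ n)
          nlinarith [pow_nonneg hρ0 n]
      _ = (ρ ^ 2) ^ n := by rw [← pow_mul, two_mul, pow_add]
  have hgeo : Summable (fun i : ℕ => (ρ ^ 2) ^ i) :=
    summable_geometric_of_lt_one (by positivity) hρ2
  have hsum : Summable (fun i : ℕ => A ^ i * (Aᵀ) ^ i) := by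
    rw [← summable_nat_add_iff 1]
    refine Summable.of_norm_bounded (hgeo.mul_left (ρ ^ 2)) fun i => ?_
    calc ‖A ^ (i + 1) * (Aᵀ) ^ (i + 1)‖ ≤ (ρ ^ 2) ^ (i + 1) := hpow _ (Nat.succ_pos i)
      _ = ρ ^ 2 * (ρ ^ 2) ^ i := by ring
  have hbd : ∀ i : ℕ, ‖A ^ (i + h) * (Aᵀ) ^ (i + h)‖ ≤ (ρ ^ 2) ^ h * (ρ ^ 2) ^ i := by
    intro i
    calc ‖A ^ (i + h) * (Aᵀ) ^ (i + h)‖ ≤ (ρ ^ 2) ^ (i + h) := hpow _ (by omega)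
      _ = (ρ ^ 2) ^ h * (ρ ^ 2) ^ i := by rw [pow_add]; ring
  have hsum2 : Summable (fun i : ℕ => ‖A ^ (i + h) * (Aᵀ) ^ (i + h)‖) :=
    Summable.of_nonneg_of_le (fun i => norm_nonneg _) hbd (hgeo.mul_left _)
  have hsplit : (∑' i : ℕ, A ^ i * (Aᵀ) ^ i)
      = (∑ i : Fin h, A ^ (i : ℕ) * (Aᵀ) ^ (i : ℕ))
        + ∑' i : ℕ, A ^ (i + h) * (Aᵀ) ^ (i + h) := by
    rw [Fin.sum_univ_eq_sum_range (fun i => A ^ i * (Aᵀ) ^ i) h]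
    exact (Summable.sum_add_tsum_nat_add h hsum).symm
  have hnormeq : matSpectralNorm ((Matrix.of fun j k : Fin m => ((A ^ h) *ᵥ z) j * ((A ^ h) *ᵥ z) k)
        + (∑ i : Fin h, A ^ (i : ℕ) * (Aᵀ) ^ (i : ℕ)) - ∑' i : ℕ, A ^ i * (Aᵀ) ^ i)
      = ‖(Matrix.of fun j k : Fin m => ((A ^ h) *ᵥ z) j * ((A ^ h) *ᵥ z) k)
          - ∑' i : ℕ, A ^ (i + h) * (Aᵀ) ^ (i + h)‖ := by
    have hmat : (Matrix.of fun j k : Fin m => ((A ^ h) *ᵥ z) j * ((A ^ h) *ᵥ z) k)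
        + (∑ i : Fin h, A ^ (i : ℕ) * (Aᵀ) ^ (i : ℕ)) - (∑' i : ℕ, A ^ i * (Aᵀ) ^ i)
        = (Matrix.of fun j k : Fin m => ((A ^ h) *ᵥ z) j * ((A ^ h) *ᵥ z) k)
          - ∑' i : ℕ, A ^ (i + h) * (Aᵀ) ^ (i + h) := by
      rw [hsplit]; abel
    rw [show matSpectralNorm ((Matrix.of fun j k : Fin m => ((A ^ h) *ᵥ z) j * ((A ^ h) *ᵥ z) k)
        + (∑ i : Fin h, A ^ (i : ℕ) * (Aᵀ) ^ (i : ℕ)) - ∑' i : ℕ, A ^ i * (Aᵀ) ^ i)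
      = ‖(Matrix.of fun j k : Fin m => ((A ^ h) *ᵥ z) j * ((A ^ h) *ᵥ z) k)
        + (∑ i : Fin h, A ^ (i : ℕ) * (Aᵀ) ^ (i : ℕ)) - ∑' i : ℕ, A ^ i * (Aᵀ) ^ i‖ from rfl, hmat]
  rw [hnormeq]
  -- bound the outer product part
  have houter : ‖(Matrix.of fun j k : Fin m => ((A ^ h) *ᵥ z) j * ((A ^ h) *ᵥ z) k)‖
      ≤ ρ ^ (2 * h) * (∑ j, (z j) ^ 2) := by
    refine le_trans (l2_norm_outer_le _) ?_
    have hmv : ‖(WithLp.equiv 2 (Fin m → ℝ)).symm ((A ^ h) *ᵥ z)‖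
        ≤ ‖A ^ h‖ * ‖(WithLp.equiv 2 (Fin m → ℝ)).symm z‖ :=
      Matrix.l2_opNorm_mulVec (A ^ h) ((WithLp.equiv 2 (Fin m → ℝ)).symm z)
    have hAh : ‖A ^ h‖ ≤ ρ ^ h := hA ▸ norm_pow_le' A hh
    have hz : ‖(WithLp.equiv 2 (Fin m → ℝ)).symm z‖ ^ 2 = ∑ j, (z j) ^ 2 := by
      rw [EuclideanSpace.norm_eq, Real.sq_sqrt (by positivity)]
      exact Finset.sum_congr rfl fun j _ => by
        simp [WithLp.equiv_symm_apply, Real.norm_eq_abs, sq_abs]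
    have h2 : ‖(WithLp.equiv 2 (Fin m → ℝ)).symm ((A ^ h) *ᵥ z)‖
        ≤ ρ ^ h * ‖(WithLp.equiv 2 (Fin m → ℝ)).symm z‖ := by
      refine le_trans hmv ?_
      have := norm_nonneg ((WithLp.equiv 2 (Fin m → ℝ)).symm z)
      nlinarith [norm_nonneg (A ^ h), pow_nonneg hρ0 h]
    calc ‖(WithLp.equiv 2 (Fin m → ℝ)).symm ((A ^ h) *ᵥ z)‖ ^ 2
        ≤ (ρ ^ h * ‖(WithLp.equiv 2 (Fin m → ℝ)).symm z‖) ^ 2 := by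
          have := norm_nonneg ((WithLp.equiv 2 (Fin m → ℝ)).symm ((A ^ h) *ᵥ z))
          nlinarith [norm_nonneg ((WithLp.equiv 2 (Fin m → ℝ)).symm z), pow_nonneg hρ0 h]
      _ = ρ ^ (2 * h) * (∑ j, (z j) ^ 2) := by
          rw [mul_pow, ← hz, ← pow_mul]
          ring_nf
  have hT : ‖∑' i : ℕ, A ^ (i + h) * (Aᵀ) ^ (i + h)‖ ≤ ρ ^ (2 * h) / (1 - ρ ^ 2) := by
    refine le_trans (norm_tsum_le_tsum_norm hsum2) ?_
    calc (∑' i : ℕ, ‖A ^ (i + h) * (Aᵀ) ^ (i + h)‖)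
        ≤ ∑' i : ℕ, (ρ ^ 2) ^ h * (ρ ^ 2) ^ i := Summable.tsum_le_tsum hbd hsum2 (hgeo.mul_left _)
      _ = (ρ ^ 2) ^ h * (1 - ρ ^ 2)⁻¹ := by
          rw [tsum_mul_left, tsum_geometric_of_lt_one (by positivity) hρ2]
      _ = ρ ^ (2 * h) / (1 - ρ ^ 2) := by rw [← pow_mul, div_eq_mul_inv]
  calc ‖(Matrix.of fun j k : Fin m => ((A ^ h) *ᵥ z) j * ((A ^ h) *ᵥ z) k)
        - ∑' i : ℕ, A ^ (i + h) * (Aᵀ) ^ (i + h)‖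
      ≤ ‖(Matrix.of fun j k : Fin m => ((A ^ h) *ᵥ z) j * ((A ^ h) *ᵥ z) k)‖
        + ‖∑' i : ℕ, A ^ (i + h) * (Aᵀ) ^ (i + h)‖ := norm_sub_le _ _
    _ ≤ ρ ^ (2 * h) * (∑ j, (z j) ^ 2) + ρ ^ (2 * h) / (1 - ρ ^ 2) := add_le_add houter hT

end NormPart


lemma memL2_mul_integrable {Ω : Type*} [MeasurableSpace Ω] {P : Measure Ω}
    {f g : Ω → ℝ} (hf : MemLp f 2 P) (hg : MemLp g 2 P) :
    Integrable (fun ω => f ω * g ω) P := by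
  have h := (((hf.add hg).integrable_sq).sub hf.integrable_sq).sub hg.integrable_sq
  refine (h.div_const 2).congr ?_
  filter_upwards with ω
  simp only [Pi.sub_apply, Pi.add_apply]
  ring

lemma second_moment_matrix_eq
    {Ω : Type*} [MeasurableSpace Ω] (P : Measure Ω) [IsProbabilityMeasure P]
    (m h : ℕ) (hh : 0 < h) (A : Matrix (Fin m) (Fin m) ℝ)
    (z : Fin m → ℝ) (ε : Fin h → Ω → (Fin m → ℝ))
    (hmeas : ∀ i, Measurable (ε i))
    (hindep : iIndepFun (m := fun _ : Fin h => (inferInstance : MeasurableSpace (Fin m → ℝ))) ε P)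
    (hL2 : ∀ i j, MemLp (fun ω => ε i ω j) 2 P)
    (hmean : ∀ i j, ∫ ω, ε i ω j ∂P = 0)
    (hcov : ∀ i j k, ∫ ω, ε i ω j * ε i ω k ∂P = if j = k then 1 else 0) :
    (Matrix.of (fun j k : Fin m =>
          ∫ ω, ((A ^ h) *ᵥ z + ∑ i : Fin h, (A ^ (i : ℕ)) *ᵥ ε i ω) j *
               ((A ^ h) *ᵥ z + ∑ i : Fin h, (A ^ (i : ℕ)) *ᵥ ε i ω) k ∂P)
      = (Matrix.of fun j k : Fin m => ((A ^ h) *ᵥ z) j * ((A ^ h) *ᵥ z) k)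
        + ∑ i : Fin h, A ^ (i : ℕ) * (Aᵀ) ^ (i : ℕ)) := by
  classical
  set u : Fin m → ℝ := (A ^ h) *ᵥ z with hu
  set X : Fin m → Ω → ℝ :=
    fun j ω => ∑ t : Fin h × Fin m, (A ^ (t.1 : ℕ)) j t.2 * ε t.1 ω t.2 with hX
  have hεint : ∀ (i : Fin h) (p : Fin m), Integrable (fun ω => ε i ω p) P :=
    fun i p => (hL2 i p).integrable one_le_two
  have hprod_int : ∀ (i i' : Fin h) (p q : Fin m),
      Integrable (fun ω => ε i ω p * ε i' ω q) P :=
    fun i i' p q => memL2_mul_integrable (hL2 i p) (hL2 i' q)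
  have hcross : ∀ (i i' : Fin h) (p q : Fin m), i ≠ i' →
      ∫ ω, ε i ω p * ε i' ω q ∂P = 0 := by
    intro i i' p q hne
    have hind : IndepFun (fun ω => ε i ω p) (fun ω => ε i' ω q) P :=
      (hindep.indepFun hne).comp (measurable_pi_apply p) (measurable_pi_apply q)
    calc ∫ ω, ε i ω p * ε i' ω q ∂P
        = (∫ ω, ε i ω p ∂P) * ∫ ω, ε i' ω q ∂P :=
          IndepFun.integral_fun_mul_eq_mul_integral hind (hεint i p).aestronglyMeasurable (hεint i' q).aestronglyMeasurable
      _ = 0 := by rw [hmean, zero_mul]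
  have hterm : ∀ t s : Fin h × Fin m,
      ∫ ω, ε t.1 ω t.2 * ε s.1 ω s.2 ∂P = if t = s then (1:ℝ) else 0 := by
    intro t s
    by_cases h1 : t.1 = s.1
    · obtain ⟨ti, tp⟩ := t; obtain ⟨si, sp⟩ := s
      simp only at h1; subst h1
      rw [hcov]
      by_cases h2 : tp = sp <;> simp [Prod.ext_iff, h2]
    · rw [hcross _ _ _ _ h1]
      simp [Prod.ext_iff, h1]
  have hXrep : ∀ (j : Fin m) (ω : Ω),
      (∑ i : Fin h, (A ^ (i : ℕ)) *ᵥ ε i ω) j = X j ω := by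
    intro j ω
    simp [hX, Fintype.sum_prod_type, Matrix.mulVec, dotProduct, Finset.sum_apply]
  have hXL2 : ∀ j, MemLp (X j) 2 P := by
    intro j
    exact memLp_finset_sum _ fun t _ => ((hL2 t.1 t.2).const_mul _)
  have hXzero : ∀ j, ∫ ω, X j ω ∂P = 0 := by
    intro j
    rw [hX]
    rw [integral_finset_sum _ (fun t _ => ((hεint t.1 t.2).const_mul _))]
    simp [integral_const_mul, hmean]
  have hXX : ∀ j k, ∫ ω, X j ω * X k ω ∂P
      = ∑ i : Fin h, (A ^ (i : ℕ) * (Aᵀ) ^ (i : ℕ)) j k := by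
    intro j k
    have expand : ∀ ω : Ω, X j ω * X k ω = ∑ t : Fin h × Fin m, ∑ s : Fin h × Fin m,
        ((A ^ (t.1 : ℕ)) j t.2 * (A ^ (s.1 : ℕ)) k s.2) * (ε t.1 ω t.2 * ε s.1 ω s.2) := by
      intro ω
      rw [hX, Finset.sum_mul_sum]
      exact Finset.sum_congr rfl fun t _ => Finset.sum_congr rfl fun s _ => by ring
    calc ∫ ω, X j ω * X k ω ∂P
        = ∑ t : Fin h × Fin m, ∑ s : Fin h × Fin m,
            ((A ^ (t.1 : ℕ)) j t.2 * (A ^ (s.1 : ℕ)) k s.2) *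
              ∫ ω, ε t.1 ω t.2 * ε s.1 ω s.2 ∂P := by
          simp only [expand]
          rw [integral_finset_sum _ (fun t _ => integrable_finset_sum _
            (fun s _ => ((hprod_int t.1 s.1 t.2 s.2).const_mul _)))]
          refine Finset.sum_congr rfl fun t _ => ?_
          rw [integral_finset_sum _ (fun s _ => ((hprod_int t.1 s.1 t.2 s.2).const_mul _))]
          exact Finset.sum_congr rfl fun s _ => integral_const_mul _ _
      _ = ∑ t : Fin h × Fin m, (A ^ (t.1 : ℕ)) j t.2 * (A ^ (t.1 : ℕ)) k t.2 := by
          simp [hterm, mul_ite, Finset.sum_ite_eq, Finset.mem_univ]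
      _ = ∑ i : Fin h, (A ^ (i : ℕ) * (Aᵀ) ^ (i : ℕ)) j k := by
          rw [Fintype.sum_prod_type]
          refine Finset.sum_congr rfl fun i _ => ?_
          simp [Matrix.mul_apply, ← Matrix.transpose_pow, Matrix.transpose_apply]
  ext j k
  have hexp : ∀ ω : Ω, ((A ^ h) *ᵥ z + ∑ i : Fin h, (A ^ (i : ℕ)) *ᵥ ε i ω) j *
        ((A ^ h) *ᵥ z + ∑ i : Fin h, (A ^ (i : ℕ)) *ᵥ ε i ω) k
      = u j * u k + (u j * X k ω + (X j ω * u k + X j ω * X k ω)) := by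
    intro ω
    simp only [Pi.add_apply, hXrep, hu]
    ring
  have hi1 : Integrable (fun ω => u j * X k ω) P := ((hXL2 k).integrable one_le_two).const_mul _
  have hi2 : Integrable (fun ω => X j ω * u k) P := ((hXL2 j).integrable one_le_two).mul_const _
  have hi3 : Integrable (fun ω => X j ω * X k ω) P := memL2_mul_integrable (hXL2 j) (hXL2 k)
  have hi23 : Integrable (fun ω => X j ω * u k + X j ω * X k ω) P := hi2.add hi3
  have hi123 : Integrable (fun ω => u j * X k ω + (X j ω * u k + X j ω * X k ω)) P :=
    hi1.add hi23
  simp only [← hu] at hexp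
  simp only [Matrix.of_apply, Matrix.add_apply, Matrix.sum_apply, hexp]
  rw [integral_add (integrable_const _) hi123, integral_add hi1 hi23, integral_add hi2 hi3,
    integral_const, integral_const_mul, integral_mul_const, hXzero, hXzero, hXX]
  simp


/-- The explicit Gaussian VAR bias bound of Section 2 of the paper: with
`Σ = Σ_{i=0}^∞ A^i (Aᵀ)^i` and `w = A^h z + Σ_{i=0}^{h−1} A^i ε_i`, where `‖A‖₂ = ρ < 1`
and the `ε_i` are independent, mean-zero, square-integrable random vectors with identity
second moment, the bias satisfies `‖𝔼[w wᵀ] − Σ‖₂ ≤ ρ^{2h} ‖z‖₂² + ρ^{2h}/(1 − ρ²)`. -/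
theorem var_second_moment_bias_bound
    {Ω : Type*} [MeasurableSpace Ω] (P : Measure Ω) [IsProbabilityMeasure P]
    (m h : ℕ) (hh : 0 < h) (A : Matrix (Fin m) (Fin m) ℝ)
    (ρ : ℝ) (hρA : matSpectralNorm A = ρ) (hρ : ρ < 1)
    (z : Fin m → ℝ) (ε : Fin h → Ω → (Fin m → ℝ))
    (hmeas : ∀ i, Measurable (ε i))
    (hindep : iIndepFun (m := fun _ : Fin h => (inferInstance : MeasurableSpace (Fin m → ℝ))) ε P)
    (hL2 : ∀ i j, MemLp (fun ω => ε i ω j) 2 P)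
    (hmean : ∀ i j, ∫ ω, ε i ω j ∂P = 0)
    (hcov : ∀ i j k, ∫ ω, ε i ω j * ε i ω k ∂P = if j = k then 1 else 0) :
    matSpectralNorm
        (Matrix.of (fun j k : Fin m =>
          ∫ ω, ((A ^ h) *ᵥ z + ∑ i : Fin h, (A ^ (i : ℕ)) *ᵥ ε i ω) j *
               ((A ^ h) *ᵥ z + ∑ i : Fin h, (A ^ (i : ℕ)) *ᵥ ε i ω) k ∂P)
          - ∑' i : ℕ, A ^ i * (Aᵀ) ^ i) ≤
      ρ ^ (2 * h) * (∑ j, (z j) ^ 2) + ρ ^ (2 * h) / (1 - ρ ^ 2) := by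
  rw [second_moment_matrix_eq P m h hh A z ε hmeas hindep hL2 hmean hcov]
  exact bias_norm_bound h hh A ρ hρA hρ z
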